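/- Let n ≥ 2 be an integer, C ∈ ℝ, 0 ≤ a < b ≤ ∞, and let v : ℝ → ℝ be twice continuously differentiable on (a,b) with θ'(r) = C·((1+v'(r)^2)/(r^2+v(r)^2)^{n−1})^{1/2} for all r ∈ (a,b), where θ(r) = arctan(v'(r)) + (n−1)·arctan(v(r)/r). Then the one-sided limits θ(a⁺) = lim_{r→a⁺} θ(r) and θ(b⁻) = lim_{r→b⁻} θ(r) exist, the improper integral ∫_a^b C^2·(1+v'(r)^2)^{1/2}/(r^2+v(r)^2)^{(n−1)/2} dr converges and equals C·(θ(b⁻) − θ(a⁺)), and in particular this integral is at most |C|·n·π. (This is the one-dimensional form of the statement that the Dirichlet energy of the phase of a radial Hamiltonian stationary graph equals C·Vol(S^{n−1})·[θ(b)−θ(a)] and is always finite.) -/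

import Mathlib

open MeasureTheory Set Filter Topology

private lemma my_monoAtTop {φ : ℝ → ℝ} {a : ℝ} (hm : MonotoneOn φ (Set.Ioi a))
    (hb : BddAbove (φ '' Set.Ioi a)) :
    Filter.Tendsto φ Filter.atTop (nhds (sSup (φ '' Set.Ioi a))) := by
  refine tendsto_order.2 ⟨fun l hl => ?_, fun m hm' => ?_⟩
  · obtain ⟨y, ⟨z, hz, rfl⟩, hy⟩ :=
      exists_lt_of_lt_csSup ((Set.nonempty_Ioi.image φ)) hl
    filter_upwards [eventually_ge_atTop z] with x hx
    exact hy.trans_le (hm hz (hz.trans_le hx) hx)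
  · filter_upwards [eventually_gt_atTop a] with x hx
    exact (le_csSup hb (Set.mem_image_of_mem _ hx)).trans_lt hm'

private lemma my_intLeft {a c La : ℝ} (hac : a < c) {φ f : ℝ → ℝ}
    (hd : ∀ x ∈ Set.Ioc a c, HasDerivAt φ (f x) x)
    (hcont : ContinuousOn f (Set.Ioc a c))
    (hpos : ∀ x ∈ Set.Ioc a c, 0 ≤ f x)
    (hlim : Filter.Tendsto φ (nhdsWithin a (Set.Ioi a)) (nhds La)) :
    MeasureTheory.IntegrableOn f (Set.Ioc a c) ∧
      (∫ x in Set.Ioc a c, f x) = φ c - La := by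
  set t : ℕ → ℝ := fun k => a + (c - a) / (k + 1) with ht
  have htpos : ∀ k : ℕ, (0:ℝ) < (c - a) / (k + 1) := fun k =>
    div_pos (sub_pos.2 hac) (by positivity)
  have htmem : ∀ k, t k ∈ Set.Ioc a c := by
    intro k
    constructor
    · simpa [ht] using htpos k
    · have : (c - a) / (k + 1 : ℝ) ≤ c - a :=
        div_le_self (sub_pos.2 hac).le (by simp)
      simp only [ht]; linarith
  have httend : Filter.Tendsto t Filter.atTop (nhds a) := by
    have h1 : Filter.Tendsto (fun k : ℕ => (c - a) / (k + 1 : ℝ)) Filter.atTop (nhds 0) := by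
      apply Filter.Tendsto.div_atTop tendsto_const_nhds
      exact Filter.tendsto_atTop_add_const_right _ 1 tendsto_natCast_atTop_atTop
    simpa using tendsto_const_nhds.add h1
  have httendW : Filter.Tendsto t Filter.atTop (nhdsWithin a (Set.Ioi a)) := by
    refine tendsto_nhdsWithin_iff.2 ⟨httend, ?_⟩
    exact Filter.Eventually.of_forall fun k => (htmem k).1
  have hφt : Filter.Tendsto (fun k => φ (t k)) Filter.atTop (nhds La) := hlim.comp httendW
  have hIccsub : ∀ k, Set.Icc (t k) c ⊆ Set.Ioc a c := fun k x hx =>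
    ⟨(htmem k).1.trans_le hx.1, hx.2⟩
  have hfi : ∀ k, MeasureTheory.IntegrableOn f (Set.Ioc (t k) c) := fun k =>
    ((hcont.mono (hIccsub k)).integrableOn_Icc).mono_set Set.Ioc_subset_Icc_self
  have heq : ∀ k, (∫ x in Set.Ioc (t k) c, f x) = φ c - φ (t k) := by
    intro k
    rw [← intervalIntegral.integral_of_le (htmem k).2]
    apply intervalIntegral.integral_eq_sub_of_hasDerivAt
    · intro x hx
      rw [Set.uIcc_of_le (htmem k).2] at hx
      exact hd x (hIccsub k hx)
    · exact (intervalIntegrable_iff_integrableOn_Ioc_of_le (htmem k).2).2 (hfi k)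
  have hbound : ∀ᶠ k in Filter.atTop, (∫ x in Set.Ioc (t k) c, ‖f x‖) ≤ φ c - La + 1 := by
    filter_upwards [hφt.eventually (eventually_ge_nhds (show La - 1 < La by linarith))] with k hk
    have : (∫ x in Set.Ioc (t k) c, ‖f x‖) = ∫ x in Set.Ioc (t k) c, f x := by
      apply MeasureTheory.setIntegral_congr_fun measurableSet_Ioc
      intro x hx
      exact Real.norm_of_nonneg (hpos x ⟨(htmem k).1.trans hx.1, hx.2⟩)
    rw [this, heq k]; linarith
  have hInt : MeasureTheory.IntegrableOn f (Set.Ioc a c) :=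
    MeasureTheory.integrableOn_Ioc_of_intervalIntegral_norm_bounded_left hfi httend hbound
  refine ⟨hInt, ?_⟩
  have cover : MeasureTheory.AECover ((volume : Measure ℝ).restrict (Set.Ioc a c))
      Filter.atTop (fun k => Set.Ioc (t k) c) :=
    MeasureTheory.aecover_Ioc_of_Ioc httend tendsto_const_nhds
  have hval := cover.integral_tendsto_of_countably_generated hInt
  have hval' : Filter.Tendsto (fun k => ∫ x in Set.Ioc (t k) c, f x) Filter.atTop
      (nhds (∫ x in Set.Ioc a c, f x)) := by
    refine hval.congr fun k => ?_
    rw [MeasureTheory.Measure.restrict_restrict measurableSet_Ioc,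
      Set.inter_eq_self_of_subset_left (Set.Ioc_subset_Ioc_left (htmem k).1.le)]
  have hval'' : Filter.Tendsto (fun k => ∫ x in Set.Ioc (t k) c, f x) Filter.atTop
      (nhds (φ c - La)) := by
    simp only [heq]
    exact tendsto_const_nhds.sub hφt
  exact tendsto_nhds_unique hval' hval''

private lemma my_intRight {c b Lb : ℝ} (hcb : c < b) {φ f : ℝ → ℝ}
    (hd : ∀ x ∈ Set.Ico c b, HasDerivAt φ (f x) x)
    (hcont : ContinuousOn f (Set.Ico c b))
    (hpos : ∀ x ∈ Set.Ico c b, 0 ≤ f x)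
    (hlim : Filter.Tendsto φ (nhdsWithin b (Set.Iio b)) (nhds Lb)) :
    MeasureTheory.IntegrableOn f (Set.Ioc c b) ∧
      (∫ x in Set.Ioc c b, f x) = Lb - φ c := by
  set t : ℕ → ℝ := fun k => b - (b - c) / (k + 1) with ht
  have htpos : ∀ k : ℕ, (0:ℝ) < (b - c) / (k + 1) := fun k =>
    div_pos (sub_pos.2 hcb) (by positivity)
  have htmem : ∀ k, t k ∈ Set.Ico c b := by
    intro k
    constructor
    · have : (b - c) / (k + 1 : ℝ) ≤ b - c :=
        div_le_self (sub_pos.2 hcb).le (by simp)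
      simp only [ht]; linarith
    · have := htpos k; simp only [ht]; linarith
  have httend : Filter.Tendsto t Filter.atTop (nhds b) := by
    have h1 : Filter.Tendsto (fun k : ℕ => (b - c) / (k + 1 : ℝ)) Filter.atTop (nhds 0) := by
      apply Filter.Tendsto.div_atTop tendsto_const_nhds
      exact Filter.tendsto_atTop_add_const_right _ 1 tendsto_natCast_atTop_atTop
    simpa using tendsto_const_nhds.sub h1
  have httendW : Filter.Tendsto t Filter.atTop (nhdsWithin b (Set.Iio b)) := by
    refine tendsto_nhdsWithin_iff.2 ⟨httend, ?_⟩
    exact Filter.Eventually.of_forall fun k => (htmem k).2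
  have hφt : Filter.Tendsto (fun k => φ (t k)) Filter.atTop (nhds Lb) := hlim.comp httendW
  have hIccsub : ∀ k, Set.Icc c (t k) ⊆ Set.Ico c b := fun k x hx =>
    ⟨hx.1, hx.2.trans_lt (htmem k).2⟩
  have hfi : ∀ k, MeasureTheory.IntegrableOn f (Set.Ioc c (t k)) := fun k =>
    ((hcont.mono (hIccsub k)).integrableOn_Icc).mono_set Set.Ioc_subset_Icc_self
  have heq : ∀ k, (∫ x in Set.Ioc c (t k), f x) = φ (t k) - φ c := by
    intro k
    rw [← intervalIntegral.integral_of_le (htmem k).1]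
    apply intervalIntegral.integral_eq_sub_of_hasDerivAt
    · intro x hx
      rw [Set.uIcc_of_le (htmem k).1] at hx
      exact hd x (hIccsub k hx)
    · exact (intervalIntegrable_iff_integrableOn_Ioc_of_le (htmem k).1).2 (hfi k)
  have hbound : ∀ᶠ k in Filter.atTop, (∫ x in Set.Ioc c (t k), ‖f x‖) ≤ Lb + 1 - φ c := by
    filter_upwards [hφt.eventually (eventually_le_nhds (show Lb < Lb + 1 by linarith))] with k hk
    have : (∫ x in Set.Ioc c (t k), ‖f x‖) = ∫ x in Set.Ioc c (t k), f x := by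
      apply MeasureTheory.setIntegral_congr_fun measurableSet_Ioc
      intro x hx
      exact Real.norm_of_nonneg (hpos x ⟨hx.1.le, hx.2.trans_lt (htmem k).2⟩)
    rw [this, heq k]; linarith
  have hInt : MeasureTheory.IntegrableOn f (Set.Ioc c b) :=
    MeasureTheory.integrableOn_Ioc_of_intervalIntegral_norm_bounded_right hfi httend hbound
  refine ⟨hInt, ?_⟩
  have cover : MeasureTheory.AECover ((volume : Measure ℝ).restrict (Set.Ioc c b))
      Filter.atTop (fun k => Set.Ioc c (t k)) :=
    MeasureTheory.aecover_Ioc_of_Ioc tendsto_const_nhds httend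
  have hval := cover.integral_tendsto_of_countably_generated hInt
  have hval' : Filter.Tendsto (fun k => ∫ x in Set.Ioc c (t k), f x) Filter.atTop
      (nhds (∫ x in Set.Ioc c b, f x)) := by
    refine hval.congr fun k => ?_
    rw [MeasureTheory.Measure.restrict_restrict measurableSet_Ioc,
      Set.inter_eq_self_of_subset_left (Set.Ioc_subset_Ioc_right (htmem k).2.le)]
  have hval'' : Filter.Tendsto (fun k => ∫ x in Set.Ioc c (t k), f x) Filter.atTop
      (nhds (Lb - φ c)) := by
    simp only [heq]
    exact hφt.sub tendsto_const_nhds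
  exact tendsto_nhds_unique hval' hval''


/-- (Proposition `Efinite` of Chen–Warren, one-dimensional form.)
Let `n ≥ 2`, `C ∈ ℝ`, `0 ≤ a < b ≤ ∞`, and let `v` be C² on `(a,b)` with phase
`θ(r) = arctan v'(r) + (n−1) arctan (v(r)/r)` satisfying
`θ'(r) = C √((1+(v')²)/(r²+v²)^{n−1})` on `(a,b)`.  Then the one-sided limits
`θ(a⁺)`, `θ(b⁻)` exist, the improper integral
`∫_a^b C² √(1+(v')²)/(r²+v²)^{(n−1)/2} dr` converges with value `C (θ(b⁻) − θ(a⁺))`,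
and it is at most `|C| n π`. -/
theorem radial_phase_energy_finite
    (n : ℕ) (hn : 2 ≤ n) (C a : ℝ) (b : EReal) (ha : 0 ≤ a) (hab : (a : EReal) < b)
    (v : ℝ → ℝ)
    (I : Set ℝ) (hI : I = {r : ℝ | a < r ∧ (r : EReal) < b})
    (hv : ContDiffOn ℝ 2 v I)
    (θ : ℝ → ℝ)
    (hθ : θ = fun r => Real.arctan (deriv v r) + ((n : ℝ) - 1) * Real.arctan (v r / r))
    (hode : ∀ r ∈ I, HasDerivAt θ
      (C * Real.sqrt ((1 + (deriv v r) ^ 2) / (r ^ 2 + (v r) ^ 2) ^ (n - 1))) r) :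
    ∃ La Lb : ℝ,
      Filter.Tendsto θ (nhdsWithin a I) (nhds La) ∧
      Filter.Tendsto θ
        ((Filter.comap (fun r : ℝ => (r : EReal)) (nhds b)) ⊓ Filter.principal I)
        (nhds Lb) ∧
      MeasureTheory.IntegrableOn
        (fun r => C ^ 2 * Real.sqrt (1 + (deriv v r) ^ 2)
          / Real.sqrt ((r ^ 2 + (v r) ^ 2) ^ (n - 1))) I ∧
      (∫ r in I, C ^ 2 * Real.sqrt (1 + (deriv v r) ^ 2)
          / Real.sqrt ((r ^ 2 + (v r) ^ 2) ^ (n - 1))) = C * (Lb - La) ∧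
      (∫ r in I, C ^ 2 * Real.sqrt (1 + (deriv v r) ^ 2)
          / Real.sqrt ((r ^ 2 + (v r) ^ 2) ^ (n - 1))) ≤ |C| * n * Real.pi := by
  have hπ : (0:ℝ) < Real.pi := Real.pi_pos
  have hn1 : (1:ℝ) ≤ (n:ℝ) := by exact_mod_cast Nat.one_le_of_lt hn
  set M : ℝ := (n:ℝ) * Real.pi / 2 with hM
  have harc : ∀ x : ℝ, |Real.arctan x| ≤ Real.pi / 2 := fun x =>
    (abs_lt.2 ⟨Real.neg_pi_div_two_lt_arctan x, Real.arctan_lt_pi_div_two x⟩).le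
  have hθb : ∀ r, |θ r| ≤ M := by
    intro r
    rw [hθ]
    calc |Real.arctan (deriv v r) + ((n : ℝ) - 1) * Real.arctan (v r / r)|
        ≤ |Real.arctan (deriv v r)| + |((n : ℝ) - 1) * Real.arctan (v r / r)| := abs_add_le _ _
      _ ≤ Real.pi / 2 + ((n : ℝ) - 1) * (Real.pi / 2) := by
          refine add_le_add (harc _) ?_
          rw [abs_mul, abs_of_nonneg (by linarith : (0:ℝ) ≤ (n:ℝ) - 1)]
          exact mul_le_mul_of_nonneg_left (harc _) (by linarith)
      _ = M := by rw [hM]; ring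
  set s : ℝ := if 0 ≤ C then (1:ℝ) else -1 with hs
  have hsC : s * C = |C| := by
    rw [hs]; split_ifs with h
    · rw [abs_of_nonneg h]; ring
    · rw [abs_of_neg (not_le.1 h)]; ring
  have hss : s * s = 1 := by rw [hs]; split_ifs <;> norm_num
  have habs : |s| = 1 := by rw [hs]; split_ifs <;> norm_num
  set ψ : ℝ → ℝ := fun r => s * θ r with hψdef
  have hθeq : θ = fun r => s * ψ r := by
    funext r; rw [hψdef]; dsimp only; rw [← mul_assoc, hss, one_mul]
  have hψb : ∀ r, |ψ r| ≤ M := fun r => by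
    rw [hψdef]; dsimp only; rw [abs_mul, habs, one_mul]; exact hθb r
  have hψd : ∀ r ∈ I, HasDerivAt ψ
      (|C| * Real.sqrt ((1 + (deriv v r) ^ 2) / (r ^ 2 + (v r) ^ 2) ^ (n - 1))) r := by
    intro r hr
    have h := (hode r hr).const_mul s
    rw [← mul_assoc, hsC] at h
    exact h
  set f : ℝ → ℝ := fun r => C ^ 2 * Real.sqrt (1 + (deriv v r) ^ 2)
      / Real.sqrt ((r ^ 2 + (v r) ^ 2) ^ (n - 1)) with hfdef
  have hfnn : ∀ r, 0 ≤ f r := fun r => by rw [hfdef]; positivity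
  set φ : ℝ → ℝ := fun r => C * θ r with hφdef
  have hfd : ∀ r ∈ I, HasDerivAt φ (f r) r := by
    intro r hr
    have h := (hode r hr).const_mul C
    have he : C * (C * Real.sqrt ((1 + (deriv v r) ^ 2) / (r ^ 2 + (v r) ^ 2) ^ (n - 1)))
        = f r := by
      rw [hfdef]; dsimp only
      rw [Real.sqrt_div (by positivity : (0:ℝ) ≤ 1 + (deriv v r) ^ 2)]; ring
    rwa [he] at h
  have hIsub : I ⊆ Set.Ioi a := by rw [hI]; intro r hr; exact hr.1
  -- continuity of f on I
  have hIopen : IsOpen I := by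
    rw [hI]
    have : {r : ℝ | a < r ∧ (r : EReal) < b} =
        Set.Ioi a ∩ ((fun r : ℝ => (r : EReal)) ⁻¹' Set.Iio b) := by
      ext r; simp [Set.mem_Ioi, Set.mem_Iio]
    rw [this]
    exact isOpen_Ioi.inter (isOpen_Iio.preimage continuous_coe_real_ereal)
  have hcontf : ContinuousOn f I := by
    have hdv : ContinuousOn (deriv v) I :=
      hv.continuousOn_deriv_of_isOpen hIopen (by norm_num)
    have hvc : ContinuousOn v I := hv.continuousOn
    rw [hfdef]
    apply ContinuousOn.div
    · exact continuousOn_const.mul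
        (Real.continuous_sqrt.comp_continuousOn (continuousOn_const.add (hdv.pow 2)))
    · exact Real.continuous_sqrt.comp_continuousOn
        (((continuous_id.pow 2).continuousOn.add (hvc.pow 2)).pow (n - 1))
    · intro x hx
      have hx0 : 0 < x := lt_of_le_of_lt ha (hIsub hx)
      have : 0 < (x ^ 2 + (v x) ^ 2) ^ (n - 1) :=
        pow_pos (add_pos_of_pos_of_nonneg (pow_pos hx0 2) (sq_nonneg _)) _
      exact ne_of_gt (Real.sqrt_pos.2 this)
  have hcontψ : ContinuousOn ψ I := fun r hr => (hψd r hr).continuousAt.continuousWithinAt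
  clear hθ hθb hss hψdef hv
  induction b using EReal.rec with
  | bot => exact absurd hab (by simp)
  | coe b' =>
    have hab' : a < b' := EReal.coe_lt_coe_iff.1 hab
    have hIeq : I = Set.Ioo a b' := by
      rw [hI]; ext r
      simp only [Set.mem_setOf_eq, Set.mem_Ioo, EReal.coe_lt_coe_iff]
    rw [hIeq] at hψd hcontψ hfd hcontf hIsub ⊢
    set c : ℝ := (a + b') / 2 with hc
    have hac : a < c := by rw [hc]; linarith
    have hcb : c < b' := by rw [hc]; linarith
    have hsubIoc : Set.Ioc a c ⊆ Set.Ioo a b' := fun x hx => ⟨hx.1, lt_of_le_of_lt hx.2 hcb⟩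
    have hsubIco : Set.Ico c b' ⊆ Set.Ioo a b' := fun x hx => ⟨hac.trans_le hx.1, hx.2⟩
    have hne : (Set.Ioo a b').Nonempty := Set.nonempty_Ioo.2 hab'
    have hmono : MonotoneOn ψ (Set.Ioo a b') := by
      apply monotoneOn_of_deriv_nonneg (convex_Ioo a b') hcontψ
      · rw [interior_Ioo]
        exact fun x hx => (hψd x hx).differentiableAt.differentiableWithinAt
      · rw [interior_Ioo]
        intro x hx
        rw [(hψd x hx).deriv]
        positivity
    have hbddA : BddAbove (ψ '' Set.Ioo a b') := by
      refine ⟨M, ?_⟩; rintro y ⟨r, -, rfl⟩; exact (abs_le.1 (hψb r)).2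
    have hbddB : BddBelow (ψ '' Set.Ioo a b') := by
      refine ⟨-M, ?_⟩; rintro y ⟨r, -, rfl⟩; exact (abs_le.1 (hψb r)).1
    set Sa : ℝ := sInf (ψ '' Set.Ioo a b') with hSa
    set Sb : ℝ := sSup (ψ '' Set.Ioo a b') with hSb
    have hSa_ge : -M ≤ Sa := le_csInf (hne.image ψ)
      (by rintro y ⟨r, -, rfl⟩; exact (abs_le.1 (hψb r)).1)
    have hSb_le : Sb ≤ M := csSup_le (hne.image ψ)
      (by rintro y ⟨r, -, rfl⟩; exact (abs_le.1 (hψb r)).2)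
    have hLa : Filter.Tendsto ψ (nhdsWithin a (Set.Ioi a)) (nhds Sa) :=
      hmono.tendsto_nhdsWithin_Ioo_right hne hbddB
    have hLb : Filter.Tendsto ψ (nhdsWithin b' (Set.Iio b')) (nhds Sb) :=
      hmono.tendsto_nhdsWithin_Ioo_left hne hbddA
    have hθa : Filter.Tendsto θ (nhdsWithin a (Set.Ioi a)) (nhds (s * Sa)) := by
      rw [hθeq]; exact hLa.const_mul s
    have hθbb : Filter.Tendsto θ (nhdsWithin b' (Set.Iio b')) (nhds (s * Sb)) := by
      rw [hθeq]; exact hLb.const_mul s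
    have hφa : Filter.Tendsto φ (nhdsWithin a (Set.Ioi a)) (nhds (C * (s * Sa))) := by
      rw [hφdef]; exact hθa.const_mul C
    have hφb : Filter.Tendsto φ (nhdsWithin b' (Set.Iio b')) (nhds (C * (s * Sb))) := by
      rw [hφdef]; exact hθbb.const_mul C
    obtain ⟨hint1, hval1⟩ := my_intLeft hac (fun x hx => hfd x (hsubIoc hx))
      (hcontf.mono hsubIoc) (fun x _ => hfnn x) hφa
    obtain ⟨hint2, hval2⟩ := my_intRight hcb (fun x hx => hfd x (hsubIco hx))
      (hcontf.mono hsubIco) (fun x _ => hfnn x) hφb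
    have hIntIoc : MeasureTheory.IntegrableOn f (Set.Ioc a b') := by
      rw [← Set.Ioc_union_Ioc_eq_Ioc hac.le hcb.le]
      exact hint1.union hint2
    have hvalI : (∫ x in Set.Ioo a b', f x) = C * ((s * Sb) - (s * Sa)) := by
      rw [← MeasureTheory.integral_Ioc_eq_integral_Ioo,
        ← Set.Ioc_union_Ioc_eq_Ioc hac.le hcb.le,
        MeasureTheory.setIntegral_union (Set.Ioc_disjoint_Ioc_of_le le_rfl) measurableSet_Ioc hint1 hint2,
        hval1, hval2]
      ring
    refine ⟨s * Sa, s * Sb, ?_, ?_, hIntIoc.mono_set Set.Ioo_subset_Ioc_self, hvalI, ?_⟩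
    · exact hθa.mono_left (nhdsWithin_mono a Set.Ioo_subset_Ioi_self)
    · have hcomap : Filter.comap (fun r : ℝ => (r : EReal)) (nhds ((b' : ℝ) : EReal))
          = nhds b' := by
        rw [EReal.nhds_coe, Filter.comap_map EReal.coe_injective]
      rw [hcomap]
      exact hθbb.mono_left (nhdsWithin_mono b' Set.Ioo_subset_Iio_self)
    · rw [hvalI]
      have h1 : C * ((s * Sb) - (s * Sa)) = |C| * (Sb - Sa) := by
        rw [← hsC]; ring
      rw [h1]
      calc |C| * (Sb - Sa) ≤ |C| * ((n:ℝ) * Real.pi) := by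
            apply mul_le_mul_of_nonneg_left _ (abs_nonneg C)
            rw [hM] at hSa_ge hSb_le; linarith
        _ = |C| * n * Real.pi := by ring
  | top =>
    have hIeq : I = Set.Ioi a := by
      rw [hI]; ext r
      simp only [Set.mem_setOf_eq, Set.mem_Ioi, EReal.coe_lt_top, and_true]
    rw [hIeq] at hψd hcontψ hfd hcontf ⊢
    set c : ℝ := a + 1 with hc
    have hac : a < c := by rw [hc]; linarith
    have hcmem : c ∈ Set.Ioi a := hac
    have hsubIoc : Set.Ioc a c ⊆ Set.Ioi a := fun x hx => hx.1
    have hne : (Set.Ioi a).Nonempty := Set.nonempty_Ioi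
    have hmono : MonotoneOn ψ (Set.Ioi a) := by
      apply monotoneOn_of_deriv_nonneg (convex_Ioi a) hcontψ
      · rw [interior_Ioi]
        exact fun x hx => (hψd x hx).differentiableAt.differentiableWithinAt
      · rw [interior_Ioi]
        intro x hx
        rw [(hψd x hx).deriv]
        positivity
    have hbddA : BddAbove (ψ '' Set.Ioi a) := by
      refine ⟨M, ?_⟩; rintro y ⟨r, -, rfl⟩; exact (abs_le.1 (hψb r)).2
    have hbddB : BddBelow (ψ '' Set.Ioi a) := by
      refine ⟨-M, ?_⟩; rintro y ⟨r, -, rfl⟩; exact (abs_le.1 (hψb r)).1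
    set Sa : ℝ := sInf (ψ '' Set.Ioi a) with hSa
    set Sb : ℝ := sSup (ψ '' Set.Ioi a) with hSb
    have hSa_ge : -M ≤ Sa := le_csInf (hne.image ψ)
      (by rintro y ⟨r, -, rfl⟩; exact (abs_le.1 (hψb r)).1)
    have hSb_le : Sb ≤ M := csSup_le (hne.image ψ)
      (by rintro y ⟨r, -, rfl⟩; exact (abs_le.1 (hψb r)).2)
    have hLa : Filter.Tendsto ψ (nhdsWithin a (Set.Ioi a)) (nhds Sa) :=
      hmono.tendsto_nhdsGT hbddB
    have hLb : Filter.Tendsto ψ Filter.atTop (nhds Sb) := my_monoAtTop hmono hbddA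
    have hθa : Filter.Tendsto θ (nhdsWithin a (Set.Ioi a)) (nhds (s * Sa)) := by
      rw [hθeq]; exact hLa.const_mul s
    have hθtop : Filter.Tendsto θ Filter.atTop (nhds (s * Sb)) := by
      rw [hθeq]; exact hLb.const_mul s
    have hφa : Filter.Tendsto φ (nhdsWithin a (Set.Ioi a)) (nhds (C * (s * Sa))) := by
      rw [hφdef]; exact hθa.const_mul C
    have hφtop : Filter.Tendsto φ Filter.atTop (nhds (C * (s * Sb))) := by
      rw [hφdef]; exact hθtop.const_mul C
    obtain ⟨hint1, hval1⟩ := my_intLeft hac (fun x hx => hfd x (hsubIoc hx))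
      (hcontf.mono hsubIoc) (fun x _ => hfnn x) hφa
    have hcontc : ContinuousWithinAt φ (Set.Ici c) c :=
      (hfd c hcmem).continuousAt.continuousWithinAt
    have hIoisub : Set.Ioi c ⊆ Set.Ioi a := fun x hx => hac.trans hx
    have hint2 : MeasureTheory.IntegrableOn f (Set.Ioi c) :=
      MeasureTheory.integrableOn_Ioi_deriv_of_nonneg hcontc
        (fun x hx => hfd x (hIoisub hx)) (fun x _ => hfnn x) hφtop
    have hval2 : (∫ x in Set.Ioi c, f x) = C * (s * Sb) - φ c :=
      MeasureTheory.integral_Ioi_of_hasDerivAt_of_nonneg hcontc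
        (fun x hx => hfd x (hIoisub hx)) (fun x _ => hfnn x) hφtop
    have hIntI : MeasureTheory.IntegrableOn f (Set.Ioi a) := by
      rw [← Set.Ioc_union_Ioi_eq_Ioi hac.le]
      exact hint1.union hint2
    have hvalI : (∫ x in Set.Ioi a, f x) = C * ((s * Sb) - (s * Sa)) := by
      rw [← Set.Ioc_union_Ioi_eq_Ioi hac.le,
        MeasureTheory.setIntegral_union Set.Ioc_disjoint_Ioi_same measurableSet_Ioi hint1 hint2,
        hval1, hval2]
      ring
    refine ⟨s * Sa, s * Sb, hθa.mono_left (nhdsWithin_mono a fun x hx => hx), ?_, hIntI,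
      hvalI, ?_⟩
    · have h1 : Filter.comap (fun r : ℝ => (r : EReal)) (nhds (⊤ : EReal))
          ≤ Filter.atTop := by
        have h2 : Filter.Tendsto (id : ℝ → ℝ)
            (Filter.comap (fun r : ℝ => (r : EReal)) (nhds (⊤ : EReal))) Filter.atTop := by
          rw [Filter.tendsto_atTop]
          intro x
          have hmem : Set.Ioi ((x : ℝ) : EReal) ∈ nhds (⊤ : EReal) :=
            Ioi_mem_nhds (EReal.coe_lt_top x)
          filter_upwards [Filter.preimage_mem_comap hmem] with r hr
          exact (EReal.coe_lt_coe_iff.1 hr).le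
        rwa [show Filter.Tendsto (id : ℝ → ℝ)
            (Filter.comap (fun r : ℝ => (r : EReal)) (nhds (⊤ : EReal))) Filter.atTop
            = (Filter.map (id : ℝ → ℝ)
              (Filter.comap (fun r : ℝ => (r : EReal)) (nhds (⊤ : EReal))) ≤ Filter.atTop)
            from rfl, Filter.map_id] at h2
      exact hθtop.mono_left (le_trans inf_le_left h1)
    · rw [hvalI]
      have h1 : C * ((s * Sb) - (s * Sa)) = |C| * (Sb - Sa) := by
        rw [← hsC]; ring
      rw [h1]
      calc |C| * (Sb - Sa) ≤ |C| * ((n:ℝ) * Real.pi) := by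
            apply mul_le_mul_of_nonneg_left _ (abs_nonneg C)
            rw [hM] at hSa_ge hSb_le; linarith
        _ = |C| * n * Real.pi := by ring
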